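/- Proposition (simplified CVaR approximation under the type-q Wasserstein ambiguity set when all dual norms coincide). The following are equivalent: (a) there exist λ > 0 and β ≤ 0 such that ε·β + λ·θ^q + E[( max_{i∈[I]}( W_i + P_q(s,λ) ) − β )₊] ≤ 0; (b) θ·ε^{−1/q}·s + CVaR_{1−ε}(W) ≤ 0. -/

import Mathlib

open MeasureTheory

private lemma keyE1 (q a b c l : ℝ) (hq : 1 < q) :
    (q * (Real.exp l * Real.exp b ^ q)) ^ (1/q) *
      (q * (Real.exp a * (q ^ (-(q/(q-1))) * Real.exp l ^ (-(1/(q-1))) *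
        Real.exp c ^ (q/(q-1))))) ^ ((q-1)/q)
      = Real.exp a * (Real.exp b * Real.exp a ^ (-(1/q)) * Real.exp c) := by
  have hq0 : (0:ℝ) < q := lt_trans one_pos hq
  have hq1 : (0:ℝ) < q - 1 := by linarith
  have hm : Real.exp (Real.log q) = q := Real.exp_log hq0
  have hE1 : Real.exp (Real.log q) - 1 ≠ 0 := by rw [hm]; exact ne_of_gt hq1
  have hE0 : Real.exp (Real.log q) ≠ 0 := (Real.exp_pos _).ne'
  rw [← hm]
  simp only [← Real.exp_mul, ← Real.exp_add]
  rw [Real.exp_eq_exp]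
  field_simp
  ring

private lemma keyE2a (q a b c : ℝ) (hq : 1 < q) :
    q * (Real.exp (((q-1)/q)*a + c + (1-q)*b - Real.log q) * Real.exp b ^ q)
      = Real.exp a ^ ((q-1)/q) * (Real.exp c * Real.exp b) := by
  have hq0 : (0:ℝ) < q := lt_trans one_pos hq
  have hq1 : (0:ℝ) < q - 1 := by linarith
  have hm : Real.exp (Real.log q) = q := Real.exp_log hq0
  have hE1 : Real.exp (Real.log q) - 1 ≠ 0 := by rw [hm]; exact ne_of_gt hq1
  have hE0 : Real.exp (Real.log q) ≠ 0 := (Real.exp_pos _).ne'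
  rw [← hm]
  simp only [← Real.exp_mul, ← Real.exp_add]
  rw [Real.exp_eq_exp]
  field_simp
  rw [Real.log_exp]; ring

private lemma keyE2b (q a b c : ℝ) (hq : 1 < q) :
    q * (q ^ (-(q/(q-1))) *
        Real.exp (((q-1)/q)*a + c + (1-q)*b - Real.log q) ^ (-(1/(q-1))) *
        Real.exp c ^ (q/(q-1)))
      = Real.exp b * Real.exp a ^ (-(1/q)) * Real.exp c := by
  have hq0 : (0:ℝ) < q := lt_trans one_pos hq
  have hq1 : (0:ℝ) < q - 1 := by linarith
  have hm : Real.exp (Real.log q) = q := Real.exp_log hq0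
  have hE1 : Real.exp (Real.log q) - 1 ≠ 0 := by rw [hm]; exact ne_of_gt hq1
  have hE0 : Real.exp (Real.log q) ≠ 0 := (Real.exp_pos _).ne'
  rw [← hm]
  simp only [← Real.exp_mul, ← Real.exp_add]
  rw [Real.exp_eq_exp]
  field_simp
  rw [Real.log_exp]; ring

private lemma integrable_sup'' {Ω : Type*} [MeasurableSpace Ω] {μ : Measure Ω} {ι : Type*}
    {t : Finset ι} (ht : t.Nonempty) (W : ι → Ω → ℝ) (hW : ∀ i, Integrable (W i) μ) :
    Integrable (fun ω => t.sup' ht (fun i => W i ω)) μ := by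
  induction ht using Finset.Nonempty.cons_induction with
  | singleton i =>
      have : (fun ω => Finset.sup' {i} (Finset.singleton_nonempty i) (fun j => W j ω)) = W i := by
        funext ω; simp
      rw [this]; exact hW i
  | cons i t hit hts ih =>
      have : (fun ω => (Finset.cons i t hit).sup' (Finset.cons_nonempty hit) (fun j => W j ω))
          = fun ω => W i ω ⊔ t.sup' hts (fun j => W j ω) := by
        funext ω; exact Finset.sup'_cons (f := fun j => W j ω) (H := hts)
      rw [this]
      exact (hW i).sup ih

/-- **Simplified CVaR approximation under the type-`q` Wasserstein ambiguity set when all dual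
norms coincide.**  With `W = max_i W_i` and
`Pq lam = (q-1) q^{-q/(q-1)} lam^{-1/(q-1)} s^{q/(q-1)}`, the following are equivalent:
(a) `∃ lam > 0, ∃ β ≤ 0, ε β + lam θ^q + E[(max_i (W_i + Pq lam) − β)₊] ≤ 0`;
(b) `θ ε^{-1/q} s + CVaR_{1-ε}(W) ≤ 0`. -/
theorem cvar_q_simplified_equivalence
    (ε θ q s : ℝ) (hε : ε ∈ Set.Ioo (0 : ℝ) 1) (hθ : 0 < θ) (hq : 1 < q) (hs : 0 < s)
    (I : ℕ) (hI : 1 ≤ I)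
    {Ω : Type*} [MeasurableSpace Ω] (μ : Measure Ω) [IsProbabilityMeasure μ]
    (W : Fin I → Ω → ℝ) (hW : ∀ i, Integrable (W i) μ)
    (Pq : ℝ → ℝ)
    (hPq : ∀ lam : ℝ, Pq lam =
      (q - 1) * q ^ (-(q / (q - 1))) * lam ^ (-(1 / (q - 1))) * s ^ (q / (q - 1))) :
    ((∃ lam > (0 : ℝ), ∃ β ≤ (0 : ℝ),
        ε * β + lam * θ ^ q +
          ∫ ω, max ((⨆ i : Fin I, (W i ω + Pq lam)) - β) 0 ∂μ ≤ 0) ↔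
      θ * ε ^ (-(1 / q)) * s +
          (⨅ β : ℝ, (β + ε⁻¹ * ∫ ω, max ((⨆ i : Fin I, W i ω) - β) 0 ∂μ)) ≤ 0) := by
  obtain ⟨hε0, hε1⟩ := hε
  have hq0 : (0:ℝ) < q := lt_trans one_pos hq
  have hq1 : (0:ℝ) < q - 1 := by linarith
  haveI : Nonempty (Fin I) := ⟨⟨0, hI⟩⟩
  obtain ⟨a, rfl⟩ : ∃ a, Real.exp a = ε := ⟨Real.log ε, Real.exp_log hε0⟩
  obtain ⟨b, rfl⟩ : ∃ b, Real.exp b = θ := ⟨Real.log θ, Real.exp_log hθ⟩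
  obtain ⟨c, rfl⟩ : ∃ c, Real.exp c = s := ⟨Real.log s, Real.exp_log hs⟩
  -- integrability facts
  have hM_int : Integrable (fun ω => ⨆ i : Fin I, W i ω) μ := by
    simpa only [Finset.sup'_univ_eq_ciSup] using integrable_sup'' Finset.univ_nonempty W hW
  have hmax_int : ∀ t : ℝ, Integrable (fun ω => max ((⨆ i : Fin I, W i ω) - t) 0) μ := fun t =>
    (hM_int.sub (integrable_const t)).sup (integrable_const 0)
  -- shifting the supremum
  have hshift : ∀ (lam β : ℝ), (fun ω => max ((⨆ i : Fin I, (W i ω + Pq lam)) - β) 0)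
      = fun ω => max ((⨆ i : Fin I, W i ω) - (β - Pq lam)) 0 := by
    intro lam β; funext ω
    have h : (⨆ i : Fin I, (W i ω + Pq lam)) = (⨆ i : Fin I, W i ω) + Pq lam := by
      rw [← Finset.sup'_univ_eq_ciSup, ← Finset.sup'_univ_eq_ciSup, Finset.sup'_add]
    rw [h]; congr 1; ring
  -- the CVaR objective function
  obtain ⟨g, hg⟩ : ∃ g : ℝ → ℝ,
      g = fun β => β + (Real.exp a)⁻¹ * ∫ ω, max ((⨆ i : Fin I, W i ω) - β) 0 ∂μ := ⟨_, rfl⟩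
  rw [show (⨅ β : ℝ, (β + (Real.exp a)⁻¹ * ∫ ω, max ((⨆ i : Fin I, W i ω) - β) 0 ∂μ))
      = iInf g from by rw [hg]]
  have hεinv : 1 < (Real.exp a)⁻¹ := one_lt_inv_iff₀.2 ⟨hε0, hε1⟩
  have hnonneg : ∀ t : ℝ, 0 ≤ ∫ ω, max ((⨆ i : Fin I, W i ω) - t) 0 ∂μ := fun t =>
    integral_nonneg fun ω => le_max_right _ _
  have g_lb1 : ∀ t : ℝ, t ≤ g t := by
    intro t
    have := mul_nonneg (inv_nonneg.2 hε0.le) (hnonneg t)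
    simp only [hg]; linarith
  obtain ⟨C, hC⟩ : ∃ C : ℝ, C = ∫ ω, (⨆ i : Fin I, W i ω) ∂μ := ⟨_, rfl⟩
  have g_lb2 : ∀ t : ℝ, (Real.exp a)⁻¹ * C + (1 - (Real.exp a)⁻¹) * t ≤ g t := by
    intro t
    have h1 : C - t ≤ ∫ ω, max ((⨆ i : Fin I, W i ω) - t) 0 ∂μ := by
      rw [hC]
      have h2 : ∫ ω, ((⨆ i : Fin I, W i ω) - t) ∂μ
          ≤ ∫ ω, max ((⨆ i : Fin I, W i ω) - t) 0 ∂μ :=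
        integral_mono (hM_int.sub (integrable_const t)) (hmax_int t) fun ω => le_max_left _ _
      rwa [integral_sub hM_int (integrable_const t), integral_const, probReal_univ,
        one_smul] at h2
    have h3 : (Real.exp a)⁻¹ * (C - t)
        ≤ (Real.exp a)⁻¹ * ∫ ω, max ((⨆ i : Fin I, W i ω) - t) 0 ∂μ :=
      mul_le_mul_of_nonneg_left h1 (inv_nonneg.2 hε0.le)
    simp only [hg]; nlinarith
  have hgc : Continuous g := by
    rw [hg]
    have hφ : LipschitzWith 1 (fun t => ∫ ω, max ((⨆ i : Fin I, W i ω) - t) 0 ∂μ) := by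
      rw [lipschitzWith_iff_dist_le_mul]
      intro x y
      rw [Real.dist_eq, Real.dist_eq]
      have h4 : (∫ ω, max ((⨆ i : Fin I, W i ω) - x) 0 ∂μ)
            - (∫ ω, max ((⨆ i : Fin I, W i ω) - y) 0 ∂μ)
          = ∫ ω, (max ((⨆ i : Fin I, W i ω) - x) 0 - max ((⨆ i : Fin I, W i ω) - y) 0) ∂μ :=
        (integral_sub (hmax_int x) (hmax_int y)).symm
      have h5 := norm_integral_le_integral_norm (μ := μ)
        (f := fun ω => max ((⨆ i : Fin I, W i ω) - x) 0 - max ((⨆ i : Fin I, W i ω) - y) 0)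
      simp only [Real.norm_eq_abs] at h5
      have h6 : ∫ ω, |max ((⨆ i : Fin I, W i ω) - x) 0 - max ((⨆ i : Fin I, W i ω) - y) 0| ∂μ
          ≤ ∫ _ω, |x - y| ∂μ := by
        refine integral_mono ((hmax_int x).sub (hmax_int y)).abs (integrable_const _) ?_
        intro ω
        calc |max ((⨆ i : Fin I, W i ω) - x) 0 - max ((⨆ i : Fin I, W i ω) - y) 0|
            ≤ |((⨆ i : Fin I, W i ω) - x) - ((⨆ i : Fin I, W i ω) - y)| :=
              abs_max_sub_max_le_abs _ _ _
          _ = |x - y| := by rw [abs_sub_comm]; congr 1; ring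
      rw [integral_const, probReal_univ, one_smul] at h6
      rw [h4]
      simpa using le_trans h5 h6
    exact continuous_id.add (continuous_const.mul hφ.continuous)
  -- existence of a minimizer of g
  obtain ⟨D, hD⟩ : ∃ D : ℝ, D = (Real.exp a)⁻¹ - 1 := ⟨_, rfl⟩
  have hD0 : 0 < D := by rw [hD]; linarith
  obtain ⟨L, hL⟩ : ∃ L : ℝ, L = min (((Real.exp a)⁻¹ * C - g 0 - 1) / D) 0 := ⟨_, rfl⟩
  obtain ⟨U, hU⟩ : ∃ U : ℝ, U = max (g 0 + 1) 0 := ⟨_, rfl⟩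
  have h0mem : (0:ℝ) ∈ Set.Icc L U :=
    ⟨by rw [hL]; exact min_le_right _ _, by rw [hU]; exact le_max_right _ _⟩
  obtain ⟨β₀, hβ₀mem, hβ₀min⟩ :=
    isCompact_Icc.exists_isMinOn ⟨0, h0mem⟩ hgc.continuousOn
  have hβ₀ : ∀ t : ℝ, g β₀ ≤ g t := by
    intro t
    by_cases hb : t ∈ Set.Icc L U
    · exact hβ₀min hb
    · have hg0b : g 0 ≤ g t := by
        simp only [Set.mem_Icc, not_and_or, not_le] at hb
        rcases hb with h | h
        · rw [hL] at h
          have hbil : t < ((Real.exp a)⁻¹ * C - g 0 - 1) / D :=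
            lt_of_lt_of_le h (min_le_left _ _)
          have h3 : t * D < (Real.exp a)⁻¹ * C - g 0 - 1 := (lt_div_iff₀ hD0).mp hbil
          have h4 := g_lb2 t
          rw [hD] at h3
          have h7 : (1 - (Real.exp a)⁻¹) * t = -(t * ((Real.exp a)⁻¹ - 1)) + 0 := by ring
          rw [h7] at h4
          linarith
        · rw [hU] at h
          have h5 : g 0 + 1 ≤ t := le_trans (le_max_left _ _) h.le
          have h6 := g_lb1 t
          linarith
      exact le_trans (hβ₀min h0mem) hg0b
  have hbdd : BddBelow (Set.range g) := ⟨g β₀, by rintro x ⟨t, rfl⟩; exact hβ₀ t⟩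
  -- Young / AM-GM inequality
  have hN1 : ∀ lam : ℝ, 0 < lam →
      Real.exp a * (Real.exp b * Real.exp a ^ (-(1/q)) * Real.exp c)
        ≤ Real.exp a * Pq lam + lam * Real.exp b ^ q := by
    intro lam hlam
    obtain ⟨l, rfl⟩ : ∃ l, Real.exp l = lam := ⟨Real.log lam, Real.exp_log hlam⟩
    rw [hPq]
    have hw : 1/q + (q-1)/q = 1 := by field_simp; ring
    have hgm := Real.geom_mean_le_arith_mean2_weighted
      (w₁ := 1/q) (w₂ := (q-1)/q)
      (p₁ := q * (Real.exp l * Real.exp b ^ q))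
      (p₂ := q * (Real.exp a * (q ^ (-(q/(q-1))) * Real.exp l ^ (-(1/(q-1))) *
        Real.exp c ^ (q/(q-1)))))
      (by positivity) (by positivity) (by positivity) (by positivity) hw
    rw [keyE1 q a b c l hq] at hgm
    refine le_trans hgm (le_of_eq ?_)
    field_simp
    ring
  -- the optimal lambda
  obtain ⟨lam₀, hlam₀⟩ : ∃ lam₀ : ℝ,
      lam₀ = Real.exp (((q-1)/q)*a + c + (1-q)*b - Real.log q) := ⟨_, rfl⟩
  have h2b' : q ^ (-(q/(q-1))) * lam₀ ^ (-(1/(q-1))) * Real.exp c ^ (q/(q-1))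
      = (Real.exp b * Real.exp a ^ (-(1/q)) * Real.exp c) / q := by
    rw [hlam₀, eq_div_iff hq0.ne']
    linear_combination keyE2b q a b c hq
  have h2b : Pq lam₀ = (q-1)/q * (Real.exp b * Real.exp a ^ (-(1/q)) * Real.exp c) := by
    rw [hPq]
    rw [show (q-1) * q ^ (-(q/(q-1))) * lam₀ ^ (-(1/(q-1))) * Real.exp c ^ (q/(q-1))
        = (q-1) * (q ^ (-(q/(q-1))) * lam₀ ^ (-(1/(q-1))) * Real.exp c ^ (q/(q-1))) from by ring,
      h2b']
    ring
  have h2a : lam₀ * Real.exp b ^ q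
      = Real.exp a ^ ((q-1)/q) * (Real.exp c * Real.exp b) / q := by
    rw [hlam₀, eq_div_iff hq0.ne']
    linear_combination keyE2a q a b c hq
  have hsplit : Real.exp a ^ ((q-1)/q) = Real.exp a * Real.exp a ^ (-(1/q)) := by
    rw [← Real.exp_mul, ← Real.exp_mul, ← Real.exp_add, Real.exp_eq_exp]
    field_simp
    ring
  have hsum : Real.exp a * Pq lam₀ + lam₀ * Real.exp b ^ q
      = Real.exp a * (Real.exp b * Real.exp a ^ (-(1/q)) * Real.exp c) := by
    rw [h2b, h2a, hsplit]
    field_simp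
    ring
  constructor
  · rintro ⟨lam, hlam, β, hβ, hmain⟩
    rw [hshift lam β] at hmain
    have hgb : g (β - Pq lam) = (β - Pq lam)
        + (Real.exp a)⁻¹ * ∫ ω, max ((⨆ i : Fin I, W i ω) - (β - Pq lam)) 0 ∂μ := by
      simp only [hg]
    have hKg : Real.exp a * ((Real.exp b * Real.exp a ^ (-(1/q)) * Real.exp c)
        + g (β - Pq lam)) ≤ 0 := by
      rw [hgb]
      have e1 : Real.exp a * ((Real.exp b * Real.exp a ^ (-(1/q)) * Real.exp c)
            + ((β - Pq lam) + (Real.exp a)⁻¹ *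
              ∫ ω, max ((⨆ i : Fin I, W i ω) - (β - Pq lam)) 0 ∂μ))
          = Real.exp a * (Real.exp b * Real.exp a ^ (-(1/q)) * Real.exp c)
            + Real.exp a * β - Real.exp a * Pq lam
            + (Real.exp a * (Real.exp a)⁻¹) *
              ∫ ω, max ((⨆ i : Fin I, W i ω) - (β - Pq lam)) 0 ∂μ := by ring
      rw [e1, mul_inv_cancel₀ (Real.exp_pos a).ne', one_mul]
      linarith [hN1 lam hlam, hmain]
    have hi : iInf g ≤ g (β - Pq lam) := ciInf_le hbdd _
    have hfin : (Real.exp b * Real.exp a ^ (-(1/q)) * Real.exp c) + g (β - Pq lam) ≤ 0 := by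
      by_contra hcon
      push_neg at hcon
      nlinarith [mul_pos (Real.exp_pos a) hcon]
    linarith
  · intro hmain
    have hgβ₀ : g β₀ ≤ -(Real.exp b * Real.exp a ^ (-(1/q)) * Real.exp c) := by
      have h1 : g β₀ ≤ iInf g := le_ciInf hβ₀
      linarith
    have hβ₀K : β₀ ≤ -(Real.exp b * Real.exp a ^ (-(1/q)) * Real.exp c) :=
      le_trans (g_lb1 β₀) hgβ₀
    have hKpos : 0 < Real.exp b * Real.exp a ^ (-(1/q)) * Real.exp c := by positivity
    refine ⟨lam₀, by rw [hlam₀]; exact Real.exp_pos _, β₀ + Pq lam₀, ?_, ?_⟩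
    · rw [h2b]
      have h8 : (q-1)/q * (Real.exp b * Real.exp a ^ (-(1/q)) * Real.exp c)
          ≤ Real.exp b * Real.exp a ^ (-(1/q)) * Real.exp c := by
        rw [div_mul_eq_mul_div, div_le_iff₀ hq0]
        nlinarith
      linarith
    · rw [hshift lam₀ (β₀ + Pq lam₀)]
      have e2 : (fun ω => max ((⨆ i : Fin I, W i ω) - (β₀ + Pq lam₀ - Pq lam₀)) 0)
          = fun ω => max ((⨆ i : Fin I, W i ω) - β₀) 0 := by
        funext ω; congr 2; ring
      rw [e2]
      have hgb0 : g β₀ = β₀ + (Real.exp a)⁻¹ * ∫ ω, max ((⨆ i : Fin I, W i ω) - β₀) 0 ∂μ := by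
        simp only [hg]
      have h9 : Real.exp a *
          (β₀ + (Real.exp a)⁻¹ * ∫ ω, max ((⨆ i : Fin I, W i ω) - β₀) 0 ∂μ)
          ≤ Real.exp a * (-(Real.exp b * Real.exp a ^ (-(1/q)) * Real.exp c)) := by
        rw [← hgb0]
        exact mul_le_mul_of_nonneg_left hgβ₀ (Real.exp_pos a).le
      have e3 : Real.exp a *
          (β₀ + (Real.exp a)⁻¹ * ∫ ω, max ((⨆ i : Fin I, W i ω) - β₀) 0 ∂μ)
          = Real.exp a * β₀ + (Real.exp a * (Real.exp a)⁻¹) *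
              ∫ ω, max ((⨆ i : Fin I, W i ω) - β₀) 0 ∂μ := by ring
      rw [e3, mul_inv_cancel₀ (Real.exp_pos a).ne', one_mul] at h9
      have e4 : Real.exp a * (β₀ + Pq lam₀) + lam₀ * Real.exp b ^ q
          = Real.exp a * β₀ + (Real.exp a * Pq lam₀ + lam₀ * Real.exp b ^ q) := by ring
      rw [e4, hsum]
      linarith
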